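/- Let μ be a probability measure on automorphisms of a complex surface X (real dimension 4) preserving a volume form, acting by holomorphic maps. If μ is expanding on average on tangent vectors (1-planes), then μ is expanding on average on 3-planes. Key computation: for any 3-plane V ⊂ T_x X with orthonormal basis of the form {v, iv, w}, and any volume-preserving holomorphic derivative Df, one has 𝔼[ln‖Df_*(v ∧ iv ∧ w)‖] = 𝔼[ln‖Df v‖]. -/

import Mathlib

open MeasureTheory

/-- Base point after `n` steps of the random composition. -/
def seqPt {G X : Type*} (t : G → X → X) : ∀ n : ℕ, (Fin n → G) → X → X
  | 0, _, x => x
  | n + 1, ω, x => t (ω (Fin.last n)) (seqPt t n (fun j => ω j.castSucc) x)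

/-- The composed derivative cocycle `D f^n_ω` over the base orbit. -/
def seqL {G X V : Type*} [TopologicalSpace V] [AddCommGroup V] [Module ℝ V]
    (t : G → X → X) (A : G → X → (V ≃L[ℝ] V)) : ∀ n : ℕ, (Fin n → G) → X → (V ≃L[ℝ] V)
  | 0, _, _ => ContinuousLinearEquiv.refl ℝ V
  | n + 1, ω, x =>
      (seqL t A n (fun j => ω j.castSucc) x).trans
        (A (ω (Fin.last n)) (seqPt t n (fun j => ω j.castSucc) x))

/-- The factor by which a linear map `L` scales the volume of a subspace `W`,
`√ det ((L|_W)* (L|_W))`, i.e. `‖L_*|_{vol_W}‖`. -/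
noncomputable def volScale {d : ℕ}
    (L : EuclideanSpace ℝ (Fin d) →L[ℝ] EuclideanSpace ℝ (Fin d))
    (W : Submodule ℝ (EuclideanSpace ℝ (Fin d))) : ℝ :=
  Real.sqrt (LinearMap.det
    (((ContinuousLinearMap.adjoint (L.comp W.subtypeL)).comp (L.comp W.subtypeL)).toLinearMap))

section Aux

open RealInnerProductSpace

local notation "E4" => EuclideanSpace ℝ (Fin 4)

/-- The Gram-matrix formula for the determinant of `M* M`, using an orthonormal basis. -/
lemma det_adjoint_comp_eq_gram {F E' : Type*} [NormedAddCommGroup F] [InnerProductSpace ℝ F]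
    [NormedAddCommGroup E'] [InnerProductSpace ℝ E'] [FiniteDimensional ℝ F]
    [FiniteDimensional ℝ E'] {ι : Type*} [Fintype ι] [DecidableEq ι]
    (b : OrthonormalBasis ι ℝ F) (M : F →L[ℝ] E') :
    LinearMap.det (((ContinuousLinearMap.adjoint M).comp M).toLinearMap)
      = Matrix.det (Matrix.of fun i j => ⟪M (b i), M (b j)⟫) := by
  rw [← LinearMap.det_toMatrix b.toBasis]
  congr 1
  ext i j
  rw [LinearMap.toMatrix_apply, Matrix.of_apply]
  simp only [OrthonormalBasis.coe_toBasis, OrthonormalBasis.coe_toBasis_repr_apply,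
    ContinuousLinearMap.coe_coe, ContinuousLinearMap.comp_apply]
  rw [b.repr_apply_apply, ContinuousLinearMap.adjoint_inner_right]

/-- The determinant of the adjoint equals the determinant, in a real inner product space. -/
lemma det_adjoint_eq {F : Type*} [NormedAddCommGroup F] [InnerProductSpace ℝ F]
    [FiniteDimensional ℝ F] {ι : Type*} [Fintype ι] [DecidableEq ι]
    (b : OrthonormalBasis ι ℝ F) (M : F →L[ℝ] F) :
    LinearMap.det (ContinuousLinearMap.adjoint M).toLinearMap
      = LinearMap.det (M.toLinearMap) := by
  rw [← LinearMap.det_toMatrix b.toBasis, ← LinearMap.det_toMatrix b.toBasis M.toLinearMap,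
    ← Matrix.det_transpose (LinearMap.toMatrix b.toBasis b.toBasis M.toLinearMap)]
  congr 1
  ext i j
  rw [Matrix.transpose_apply, LinearMap.toMatrix_apply, LinearMap.toMatrix_apply]
  simp only [OrthonormalBasis.coe_toBasis, OrthonormalBasis.coe_toBasis_repr_apply,
    ContinuousLinearMap.coe_coe]
  rw [b.repr_apply_apply, b.repr_apply_apply, ContinuousLinearMap.adjoint_inner_right,
    real_inner_comm]

lemma J_inner (J : E4 ≃L[ℝ] E4) (hJiso : ∀ v, ‖J v‖ = ‖v‖) (x y : E4) :
    ⟪J x, J y⟫ = ⟪x, y⟫ := by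
  rw [real_inner_eq_norm_add_mul_self_sub_norm_mul_self_sub_norm_mul_self_div_two,
    real_inner_eq_norm_add_mul_self_sub_norm_mul_self_sub_norm_mul_self_div_two x y,
    ← map_add, hJiso, hJiso, hJiso]

lemma J_skew (J : E4 ≃L[ℝ] E4) (hJ2 : ∀ v, J (J v) = -v) (hJiso : ∀ v, ‖J v‖ = ‖v‖)
    (x : E4) : ⟪J x, x⟫ = 0 := by
  have h1 : ⟪J (J x), J x⟫ = ⟪J x, x⟫ := J_inner J hJiso (J x) x
  rw [hJ2, inner_neg_left] at h1
  have h3 : ⟪x, J x⟫ = ⟪J x, x⟫ := real_inner_comm _ _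
  linarith

lemma J_inner_right (J : E4 ≃L[ℝ] E4) (hJ2 : ∀ v, J (J v) = -v) (hJiso : ∀ v, ‖J v‖ = ‖v‖)
    (x y : E4) : ⟪x, J y⟫ = -⟪J x, y⟫ := by
  have := J_inner J hJiso (J x) y
  rw [hJ2, inner_neg_left] at this
  linarith

lemma onb_quad (J : E4 ≃L[ℝ] E4) (hJ2 : ∀ v, J (J v) = -v) (hJiso : ∀ v, ‖J v‖ = ‖v‖)
    (v w : E4) (hv : ‖v‖ = 1) (hw : ‖w‖ = 1) (hvw : ⟪v, w⟫ = 0) (hJvw : ⟪J v, w⟫ = 0) :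
    Orthonormal ℝ ![v, J v, w, J w] := by
  have h1 : ⟪v, J v⟫ = 0 := by rw [real_inner_comm]; exact J_skew J hJ2 hJiso v
  have h2 : ⟪J v, v⟫ = 0 := J_skew J hJ2 hJiso v
  have h3 : ⟪w, v⟫ = 0 := by rw [real_inner_comm]; exact hvw
  have h4 : ⟪w, J v⟫ = 0 := by rw [real_inner_comm]; exact hJvw
  have h5 : ⟪w, J w⟫ = 0 := by rw [real_inner_comm]; exact J_skew J hJ2 hJiso w
  have h6 : ⟪J w, w⟫ = 0 := J_skew J hJ2 hJiso w
  have h7 : ⟪v, J w⟫ = 0 := by rw [J_inner_right J hJ2 hJiso, hJvw, neg_zero]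
  have h8 : ⟪J w, v⟫ = 0 := by rw [real_inner_comm]; exact h7
  have h9 : ⟪J v, J w⟫ = 0 := by rw [J_inner J hJiso]; exact hvw
  have h10 : ⟪J w, J v⟫ = 0 := by rw [real_inner_comm]; exact h9
  have n1 : ⟪v, v⟫ = 1 := by rw [real_inner_self_eq_norm_sq, hv]; norm_num
  have n2 : ⟪J v, J v⟫ = 1 := by rw [J_inner J hJiso]; exact n1
  have n3 : ⟪w, w⟫ = 1 := by rw [real_inner_self_eq_norm_sq, hw]; norm_num
  have n4 : ⟪J w, J w⟫ = 1 := by rw [J_inner J hJiso]; exact n3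
  rw [orthonormal_iff_ite]
  intro i j
  fin_cases i <;> fin_cases j <;>
    simp [h1, h2, h3, h4, h5, h6, h7, h8, h9, h10, n1, n2, n3, n4, hvw, hJvw,
      -PiLp.inner_apply, hJiso, hv, hw]

lemma onb_triple (J : E4 ≃L[ℝ] E4) (hJ2 : ∀ v, J (J v) = -v) (hJiso : ∀ v, ‖J v‖ = ‖v‖)
    (v w : E4) (hv : ‖v‖ = 1) (hw : ‖w‖ = 1) (hvw : ⟪v, w⟫ = 0) (hJvw : ⟪J v, w⟫ = 0) :
    Orthonormal ℝ ![v, J v, w] := by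
  have h1 : ⟪v, J v⟫ = 0 := by rw [real_inner_comm]; exact J_skew J hJ2 hJiso v
  have h2 : ⟪J v, v⟫ = 0 := J_skew J hJ2 hJiso v
  have h3 : ⟪w, v⟫ = 0 := by rw [real_inner_comm]; exact hvw
  have h4 : ⟪w, J v⟫ = 0 := by rw [real_inner_comm]; exact hJvw
  have n1 : ⟪v, v⟫ = 1 := by rw [real_inner_self_eq_norm_sq, hv]; norm_num
  have n2 : ⟪J v, J v⟫ = 1 := by rw [J_inner J hJiso]; exact n1
  have n3 : ⟪w, w⟫ = 1 := by rw [real_inner_self_eq_norm_sq, hw]; norm_num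
  rw [orthonormal_iff_ite]
  intro i j
  fin_cases i <;> fin_cases j <;>
    simp [h1, h2, h3, h4, n1, n2, n3, hvw, hJvw, -PiLp.inner_apply, hJiso, hv, hw]

lemma det4_formula (p q r u : ℝ) :
    (!![p, 0, r, -u; 0, p, u, r; r, u, q, 0; -u, r, 0, q] : Matrix (Fin 4) (Fin 4) ℝ).det
    = (p * q - r ^ 2 - u ^ 2) ^ 2 := by
  simp [Matrix.det_succ_row_zero, Fin.sum_univ_succ, Fin.succAbove_of_lt_succ,
    Fin.succAbove_of_succ_le]
  ring

lemma det3_formula (p q r u : ℝ) :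
    (!![p, 0, r; 0, p, u; r, u, q] : Matrix (Fin 3) (Fin 3) ℝ).det
    = p * (p * q - r ^ 2 - u ^ 2) := by
  rw [Matrix.det_fin_three]
  simp
  ring

set_option maxHeartbeats 1000000 in
/-- **Key computation**: for a volume-preserving holomorphic `L` and a 3-plane spanned by an
orthonormal family `{v, J v, w}`, the volume scaling factor of `L` on the 3-plane equals
`‖L v‖`. -/
lemma volScale_key (J L : E4 ≃L[ℝ] E4)
    (hJ2 : ∀ v, J (J v) = -v) (hJiso : ∀ v, ‖J v‖ = ‖v‖)
    (hcomm : ∀ u, L (J u) = J (L u))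
    (hdet : |LinearMap.det (((L : E4 →L[ℝ] E4)) : E4 →ₗ[ℝ] E4)| = 1)
    (v w : E4) (hv : ‖v‖ = 1) (hw : ‖w‖ = 1)
    (hvw : ⟪v, w⟫ = 0) (hJvw : ⟪J v, w⟫ = 0)
    (W : Submodule ℝ E4) (hW : W = Submodule.span ℝ {v, J v, w}) :
    volScale (L : E4 →L[ℝ] E4) W = ‖L v‖ := by
  set a : E4 := L v with ha
  set c : E4 := L w with hc
  set α : ℝ := ⟪a, c⟫ with hα
  set β : ℝ := ⟪J a, c⟫ with hβ
  set s : ℝ := ‖a‖ ^ 2 * ‖c‖ ^ 2 - α ^ 2 - β ^ 2 with hs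
  -- inner product facts on the image side
  have haa : ⟪a, a⟫ = ‖a‖ ^ 2 := real_inner_self_eq_norm_sq a
  have hcc : ⟪c, c⟫ = ‖c‖ ^ 2 := real_inner_self_eq_norm_sq c
  have haJa : ⟪a, J a⟫ = 0 := by rw [real_inner_comm]; exact J_skew J hJ2 hJiso a
  have hJaa : ⟪J a, a⟫ = 0 := J_skew J hJ2 hJiso a
  have hJaJa : ⟪J a, J a⟫ = ‖a‖ ^ 2 := by rw [J_inner J hJiso]; exact haa
  have hcJc : ⟪c, J c⟫ = 0 := by rw [real_inner_comm]; exact J_skew J hJ2 hJiso c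
  have hJcc : ⟪J c, c⟫ = 0 := J_skew J hJ2 hJiso c
  have hJcJc : ⟪J c, J c⟫ = ‖c‖ ^ 2 := by rw [J_inner J hJiso]; exact hcc
  have hca : ⟪c, a⟫ = α := by rw [real_inner_comm]
  have hcJa : ⟪c, J a⟫ = β := by rw [real_inner_comm]
  have haJc : ⟪a, J c⟫ = -β := by rw [J_inner_right J hJ2 hJiso]
  have hJca : ⟪J c, a⟫ = -β := by rw [real_inner_comm]; exact haJc
  have hJaJc : ⟪J a, J c⟫ = α := by rw [J_inner J hJiso, real_inner_comm]; exact hca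
  have hJcJa : ⟪J c, J a⟫ = α := by rw [real_inner_comm]; exact hJaJc
  -- step 1 : s = 1
  have hg := onb_quad J hJ2 hJiso v w hv hw hvw hJvw
  have hcard : Fintype.card (Fin 4) = Module.finrank ℝ E4 := by
    simp [finrank_euclideanSpace]
  let bas4 : Module.Basis (Fin 4) ℝ E4 :=
    basisOfLinearIndependentOfCardEqFinrank hg.linearIndependent hcard
  have hbas4 : ⇑bas4 = ![v, J v, w, J w] :=
    coe_basisOfLinearIndependentOfCardEqFinrank _ _
  let B : OrthonormalBasis (Fin 4) ℝ E4 := bas4.toOrthonormalBasis (by rw [hbas4]; exact hg)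
  have hB : ⇑B = ![v, J v, w, J w] := by
    rw [show ⇑B = ⇑bas4 from Module.Basis.coe_toOrthonormalBasis _ _, hbas4]
  have h4 := det_adjoint_comp_eq_gram B (L : E4 →L[ℝ] E4)
  have hmat4 : (Matrix.of fun i j => ⟪(L : E4 →L[ℝ] E4) (B i), (L : E4 →L[ℝ] E4) (B j)⟫)
      = !![‖a‖^2, 0, α, -β; 0, ‖a‖^2, β, α; α, β, ‖c‖^2, 0; -β, α, 0, ‖c‖^2] := by
    have hLv : ∀ i, (L : E4 →L[ℝ] E4) (![v, J v, w, J w] i) = ![a, J a, c, J c] i := by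
      intro i
      fin_cases i <;> simp [hcomm, ha, hc]
    ext i j
    rw [Matrix.of_apply, hB, hLv, hLv]
    fin_cases i <;> fin_cases j <;>
      simp [haa, hcc, haJa, hJaa, hJaJa, hcJc, hJcc, hJcJc, hca, hcJa, haJc, hJca, hJaJc,
        hJcJa, hα, hβ, -PiLp.inner_apply, hJiso]
  have hdet4 : (!![‖a‖^2, 0, α, -β; 0, ‖a‖^2, β, α;
      α, β, ‖c‖^2, 0; -β, α, 0, ‖c‖^2] : Matrix (Fin 4) (Fin 4) ℝ).det = s ^ 2 := by
    rw [hs, det4_formula]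
  have hLL : LinearMap.det (((ContinuousLinearMap.adjoint (L : E4 →L[ℝ] E4)).comp
      (L : E4 →L[ℝ] E4)).toLinearMap) = 1 := by
    rw [ContinuousLinearMap.toLinearMap_comp, LinearMap.det_comp, det_adjoint_eq B]
    have : LinearMap.det (((L : E4 →L[ℝ] E4)) : E4 →ₗ[ℝ] E4) ^ 2 = 1 := by
      rw [← sq_abs, hdet]; norm_num
    nlinarith [this]
  have hs2 : s ^ 2 = 1 := by rw [← hdet4, ← hmat4, ← h4, hLL]
  have hsnn : 0 ≤ s := by
    have hcs := real_inner_mul_inner_self_le (α • a + β • J a) c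
    have e1 : ⟪α • a + β • J a, c⟫ = α ^ 2 + β ^ 2 := by
      rw [inner_add_left, real_inner_smul_left, real_inner_smul_left]; rw [hα, hβ] at *; ring
    have e2 : ⟪α • a + β • J a, α • a + β • J a⟫ = (α ^ 2 + β ^ 2) * ‖a‖ ^ 2 := by
      rw [inner_add_left, inner_add_right, inner_add_right, real_inner_smul_left,
        real_inner_smul_left, real_inner_smul_left, real_inner_smul_left,
        real_inner_smul_right, real_inner_smul_right, real_inner_smul_right,
        real_inner_smul_right, haa, haJa, hJaa, hJaJa]
      ring
    rw [e1, e2, hcc] at hcs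
    nlinarith [sq_nonneg α, sq_nonneg β, sq_nonneg (‖a‖ * ‖c‖), hcs]
  have hs1 : s = 1 := by nlinarith [hs2, hsnn]
  -- step 2 : the 3×3 Gram determinant
  have hf := onb_triple J hJ2 hJiso v w hv hw hvw hJvw
  have hrange : ({v, J v, w} : Set E4) = Set.range ![v, J v, w] := by
    ext x
    simp [Matrix.range_cons, Matrix.range_empty]
    tauto
  rw [hrange] at hW
  subst hW
  set W := Submodule.span ℝ (Set.range ![v, J v, w]) with hWdef
  let bas : Module.Basis (Fin 3) ℝ W := Module.Basis.span hf.linearIndependent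
  have hbascoe : ∀ i, ((bas i : E4)) = ![v, J v, w] i := fun i => congrArg Subtype.val (Module.Basis.span_apply _ i)
  have honb : Orthonormal ℝ ⇑bas := by
    rw [orthonormal_iff_ite]
    intro i j
    rw [Submodule.coe_inner, hbascoe, hbascoe]
    exact orthonormal_iff_ite.mp hf i j
  let b : OrthonormalBasis (Fin 3) ℝ W := bas.toOrthonormalBasis honb
  have hbcoe : ∀ i, ((b i : E4)) = ![v, J v, w] i := by
    intro i
    rw [show ⇑b = ⇑bas from Module.Basis.coe_toOrthonormalBasis _ _]
    exact hbascoe i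
  rw [volScale, det_adjoint_comp_eq_gram b]
  have hmat3 : (Matrix.of fun i j => ⟪((L : E4 →L[ℝ] E4).comp W.subtypeL) (b i),
      ((L : E4 →L[ℝ] E4).comp W.subtypeL) (b j)⟫)
      = !![‖a‖^2, 0, α; 0, ‖a‖^2, β; α, β, ‖c‖^2] := by
    have hMb : ∀ i, ((L : E4 →L[ℝ] E4).comp W.subtypeL) (b i) = ![a, J a, c] i := by
      intro i
      rw [ContinuousLinearMap.comp_apply, Submodule.subtypeL_apply]
      rw [hbcoe]
      fin_cases i <;> simp [hcomm, ha, hc]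
    ext i j
    rw [Matrix.of_apply, hMb, hMb]
    fin_cases i <;> fin_cases j <;>
      simp [haa, hcc, haJa, hJaa, hJaJa, hca, hcJa, hα, hβ, -PiLp.inner_apply, hJiso]
  rw [hmat3]
  have : (!![‖a‖^2, 0, α; 0, ‖a‖^2, β; α, β, ‖c‖^2] : Matrix (Fin 3) (Fin 3) ℝ).det
      = ‖a‖ ^ 2 * s := by
    rw [hs, det3_formula]
  rw [this, hs1, mul_one, Real.sqrt_sq (norm_nonneg a)]

/-- Any 3-plane in the presence of an orthogonal complex structure admits an orthonormal basis
of the form `{v, J v, w}`. -/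
lemma exists_cplx_onb (J : E4 ≃L[ℝ] E4) (hJ2 : ∀ v, J (J v) = -v) (hJiso : ∀ v, ‖J v‖ = ‖v‖)
    (W : Submodule ℝ E4) (hW3 : Module.finrank ℝ W = 3) :
    ∃ v w : E4, ‖v‖ = 1 ∧ ‖w‖ = 1 ∧ ⟪v, w⟫ = 0 ∧ ⟪J v, w⟫ = 0 ∧
      Submodule.span ℝ {v, J v, w} = W := by
  have hE : Module.finrank ℝ E4 = 4 := by simp [finrank_euclideanSpace]
  -- find a unit vector v with v ∈ W and J v ∈ W
  set W' : Submodule ℝ E4 := W.comap (J.toLinearEquiv : E4 →ₗ[ℝ] E4) with hW'def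
  have hW'3 : Module.finrank ℝ W' = 3 := by
    rw [hW'def, Submodule.comap_equiv_eq_map_symm, LinearEquiv.finrank_map_eq, hW3]
  have hinf : 2 ≤ Module.finrank ℝ ↥(W ⊓ W') := by
    have h1 := Submodule.finrank_sup_add_finrank_inf_eq W W'
    have h2 := Submodule.finrank_le (W ⊔ W')
    rw [hE] at h2
    omega
  have hne : W ⊓ W' ≠ ⊥ := by
    intro h
    rw [h] at hinf
    simp [finrank_bot] at hinf
  obtain ⟨v₀, hv₀mem, hv₀⟩ := Submodule.exists_mem_ne_zero_of_ne_bot hne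
  set v : E4 := ‖v₀‖⁻¹ • v₀ with hvdef
  have hv : ‖v‖ = 1 := norm_smul_inv_norm hv₀
  have hvW : v ∈ W := W.smul_mem _ (Submodule.mem_inf.mp hv₀mem).1
  have hJvW : J v ∈ W := by
    have h1 : J v₀ ∈ W := (Submodule.mem_inf.mp hv₀mem).2
    have : J v = ‖v₀‖⁻¹ • J v₀ := by rw [hvdef, _root_.map_smul]
    rw [this]
    exact W.smul_mem _ h1
  -- find a unit vector w in W orthogonal to v and J v
  set S : Submodule ℝ E4 := Submodule.span ℝ {v, J v} with hSdef
  have hS2 : Module.finrank ℝ S ≤ 2 := by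
    have hvne : v ≠ 0 := by
      intro h
      rw [h, norm_zero] at hv
      norm_num at hv
    have hJvne : J v ≠ 0 := by
      intro h
      have := hJiso v
      rw [h, norm_zero, hv] at this
      norm_num at this
    have h1 : S = Submodule.span ℝ {v} ⊔ Submodule.span ℝ {J v} := by
      rw [hSdef, Set.insert_eq, Submodule.span_union]
    calc Module.finrank ℝ S = Module.finrank ℝ ↥(Submodule.span ℝ {v} ⊔ Submodule.span ℝ {J v}) :=
          by rw [h1]
      _ ≤ Module.finrank ℝ ↥(Submodule.span ℝ {v}) +
            Module.finrank ℝ ↥(Submodule.span ℝ {J v}) := by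
          have := Submodule.finrank_sup_add_finrank_inf_eq
            (Submodule.span ℝ {v}) (Submodule.span ℝ {J v})
          omega
      _ ≤ 1 + 1 := by
          rw [show Submodule.span ℝ ({v} : Set E4) = ℝ ∙ v from rfl,
            show Submodule.span ℝ ({J v} : Set E4) = ℝ ∙ (J v) from rfl,
            finrank_span_singleton hvne, finrank_span_singleton hJvne]
      _ = 2 := rfl
  have hSo : 2 ≤ Module.finrank ℝ Sᗮ := by
    have := Submodule.finrank_add_finrank_orthogonal S
    rw [hE] at this
    omega
  have hUne : W ⊓ Sᗮ ≠ ⊥ := by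
    intro h
    have h1 := Submodule.finrank_sup_add_finrank_inf_eq W Sᗮ
    rw [h] at h1
    have h2 := Submodule.finrank_le (W ⊔ Sᗮ)
    rw [hE] at h2
    rw [finrank_bot] at h1
    omega
  obtain ⟨w₀, hw₀mem, hw₀⟩ := Submodule.exists_mem_ne_zero_of_ne_bot hUne
  set w : E4 := ‖w₀‖⁻¹ • w₀ with hwdef
  have hw : ‖w‖ = 1 := norm_smul_inv_norm hw₀
  have hwW : w ∈ W := W.smul_mem _ (Submodule.mem_inf.mp hw₀mem).1
  have hwS : w ∈ Sᗮ := Sᗮ.smul_mem _ (Submodule.mem_inf.mp hw₀mem).2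
  have hvw : ⟪v, w⟫ = 0 :=
    (Submodule.mem_orthogonal S w).mp hwS v (Submodule.subset_span (by simp))
  have hJvw : ⟪J v, w⟫ = 0 :=
    (Submodule.mem_orthogonal S w).mp hwS (J v) (Submodule.subset_span (by simp))
  refine ⟨v, w, hv, hw, hvw, hJvw, ?_⟩
  have hf := onb_triple J hJ2 hJiso v w hv hw hvw hJvw
  have hle : Submodule.span ℝ {v, J v, w} ≤ W := by
    rw [Submodule.span_le]
    intro x hx
    simp only [Set.mem_insert_iff, Set.mem_singleton_iff] at hx
    rcases hx with h | h | h <;> subst h <;> assumption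
  apply Submodule.eq_of_le_of_finrank_le hle
  have hrange : ({v, J v, w} : Set E4) = Set.range ![v, J v, w] := by
    ext x
    simp [Matrix.range_cons, Matrix.range_empty]
    tauto
  rw [hrange, finrank_span_eq_card hf.linearIndependent, hW3]
  simp

lemma seqL_comm {G X : Type*} (J : E4 ≃L[ℝ] E4) (t : G → X → X)
    (A : G → X → (E4 ≃L[ℝ] E4)) (hholo : ∀ g x v, (A g x) (J v) = J ((A g x) v)) :
    ∀ (n : ℕ) (ω : Fin n → G) (x : X) (u : E4),
      (seqL t A n ω x) (J u) = J ((seqL t A n ω x) u) := by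
  intro n
  induction n with
  | zero => intro ω x u; simp [seqL]
  | succ n ih =>
    intro ω x u
    simp only [seqL, ContinuousLinearEquiv.trans_apply, ih, hholo]

lemma seqL_det {G X : Type*} (t : G → X → X)
    (A : G → X → (E4 ≃L[ℝ] E4))
    (hvol : ∀ g x, |LinearMap.det (((A g x : E4 →L[ℝ] E4)) : E4 →ₗ[ℝ] E4)| = 1) :
    ∀ (n : ℕ) (ω : Fin n → G) (x : X),
      |LinearMap.det (((seqL t A n ω x : E4 →L[ℝ] E4)) : E4 →ₗ[ℝ] E4)| = 1 := by
  intro n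
  induction n with
  | zero =>
    intro ω x
    simp [seqL]
  | succ n ih =>
    intro ω x
    have : ((seqL t A (n+1) ω x : E4 →L[ℝ] E4) : E4 →ₗ[ℝ] E4)
        = (((A (ω (Fin.last n)) (seqPt t n (fun j => ω j.castSucc) x) : E4 →L[ℝ] E4) :
            E4 →ₗ[ℝ] E4)).comp
          (((seqL t A n (fun j => ω j.castSucc) x : E4 →L[ℝ] E4)) : E4 →ₗ[ℝ] E4) := by
      rfl
    rw [this, LinearMap.det_comp, abs_mul, ih, hvol, mul_one]

end Aux

/-- Let `μ` be a measure on volume-preserving holomorphic automorphisms of a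
complex surface `X` (real dimension 4): the real derivative cocycle `A` commutes with the
orthogonal complex structure `J` (`J² = −1`) and has `|det| = 1`. If `μ` is expanding on
average on tangent vectors (1-planes), then it is expanding on average on 3-planes. Key
computation: for any 3-plane with orthonormal basis `{v, Jv, w}`,
`𝔼[log ‖Df_* (v ∧ Jv ∧ w)‖] = 𝔼[log ‖Df v‖]`. -/
theorem stmt19 {G X : Type*} [MeasurableSpace G]
    (μ : Measure G) [IsProbabilityMeasure μ]
    (J : EuclideanSpace ℝ (Fin 4) ≃L[ℝ] EuclideanSpace ℝ (Fin 4))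
    (hJ2 : ∀ v, J (J v) = -v) (hJiso : ∀ v, ‖J v‖ = ‖v‖)
    (t : G → X → X)
    (A : G → X → (EuclideanSpace ℝ (Fin 4) ≃L[ℝ] EuclideanSpace ℝ (Fin 4)))
    (hholo : ∀ g x v, (A g x) (J v) = J ((A g x) v))
    (hvol : ∀ g x, |LinearMap.det
      (((A g x : EuclideanSpace ℝ (Fin 4) →L[ℝ] EuclideanSpace ℝ (Fin 4))) :
        EuclideanSpace ℝ (Fin 4) →ₗ[ℝ] EuclideanSpace ℝ (Fin 4))| = 1) :
    ((∃ (N : ℕ) (lam : ℝ), 0 < N ∧ 0 < lam ∧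
        ∀ (x : X) (v : EuclideanSpace ℝ (Fin 4)), ‖v‖ = 1 →
          lam ≤ ∫ ω, Real.log ‖(seqL t A N ω x) v‖ ∂(Measure.pi fun _ : Fin N => μ)) →
      (∃ (N : ℕ) (lam : ℝ), 0 < N ∧ 0 < lam ∧
        ∀ (x : X) (W : Submodule ℝ (EuclideanSpace ℝ (Fin 4))), Module.finrank ℝ W = 3 →
          lam ≤ ∫ ω, Real.log (volScale
              ((seqL t A N ω x :
                EuclideanSpace ℝ (Fin 4) →L[ℝ] EuclideanSpace ℝ (Fin 4))) W)
            ∂(Measure.pi fun _ : Fin N => μ))) ∧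
    (∀ (x : X) (v w : EuclideanSpace ℝ (Fin 4)),
      ‖v‖ = 1 → ‖w‖ = 1 → (inner ℝ v w : ℝ) = 0 → (inner ℝ (J v) w : ℝ) = 0 →
      ∫ g, Real.log (volScale
          ((A g x : EuclideanSpace ℝ (Fin 4) →L[ℝ] EuclideanSpace ℝ (Fin 4)))
          (Submodule.span ℝ {v, J v, w})) ∂μ
        = ∫ g, Real.log ‖(A g x) v‖ ∂μ) := by
  constructor
  · rintro ⟨N, lam, hN, hlam, h⟩
    refine ⟨N, lam, hN, hlam, fun x W hW3 => ?_⟩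
    obtain ⟨v, w, hv, hw, hvw, hJvw, hspan⟩ := exists_cplx_onb J hJ2 hJiso W hW3
    have heq : (fun ω : Fin N → G => Real.log (volScale
        ((seqL t A N ω x : EuclideanSpace ℝ (Fin 4) →L[ℝ] EuclideanSpace ℝ (Fin 4))) W))
        = fun ω => Real.log ‖(seqL t A N ω x) v‖ := by
      funext ω
      rw [volScale_key J (seqL t A N ω x) hJ2 hJiso
        (fun u => seqL_comm J t A hholo N ω x u) (seqL_det t A hvol N ω x)
        v w hv hw hvw hJvw W hspan.symm]
    rw [heq]
    exact h x v hv
  · intro x v w hv hw h1 h2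
    have heq : (fun g => Real.log (volScale
        ((A g x : EuclideanSpace ℝ (Fin 4) →L[ℝ] EuclideanSpace ℝ (Fin 4)))
        (Submodule.span ℝ {v, J v, w})))
        = fun g => Real.log ‖(A g x) v‖ := by
      funext g
      rw [volScale_key J (A g x) hJ2 hJiso (fun u => hholo g x u) (hvol g x)
        v w hv hw h1 h2 _ rfl]
    rw [heq]
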